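/- Let a > 0 and let g : [0,∞) → ℝ be continuous and bounded. Define f(γ,t) = ∫_0^t g(t−s)·K_a(γ,s) ds for γ > 0 and t > 0, where K_a(γ,s) = (√a·γ/(2√π·s^{3/2}))·e^{−aγ²/(4s)}. Then f satisfies the heat equation ∂f/∂t(γ,t) = (1/a)·∂²f/∂γ²(γ,t) at every point (γ,t) ∈ (0,∞)×(0,∞). -/

import Mathlib

open Real MeasureTheory intervalIntegral Filter Metric Topology

namespace BKaux

/-- `P m q s = s^(-m) * exp(-q/s)` for `s > 0`, extended by `0`. -/
noncomputable def P (m q s : ℝ) : ℝ := if 0 < s then s ^ (-m) * Real.exp (-(q / s)) else 0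

lemma P_of_nonpos (m q : ℝ) {s : ℝ} (hs : s ≤ 0) : P m q s = 0 := if_neg (not_lt.2 hs)

lemma P_of_pos (m q : ℝ) {s : ℝ} (hs : 0 < s) :
    P m q s = s ^ (-m) * Real.exp (-(q / s)) := if_pos hs

lemma tendsto_P_right (m : ℝ) {q : ℝ} (hq : 0 < q) :
    Tendsto (P m q) (nhdsWithin 0 (Set.Ioi 0)) (nhds 0) := by
  have h1 : Tendsto (fun x : ℝ => x ^ m * Real.exp (-q * x)) atTop (nhds 0) :=
    tendsto_rpow_mul_exp_neg_mul_atTop_nhds_zero m q hq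
  have h2 : Tendsto (fun s : ℝ => s⁻¹) (nhdsWithin 0 (Set.Ioi 0)) atTop :=
    tendsto_inv_nhdsGT_zero
  refine (h1.comp h2).congr' ?_
  filter_upwards [self_mem_nhdsWithin] with s hs
  have hs : (0:ℝ) < s := hs
  simp only [Function.comp, P, if_pos hs]
  rw [Real.rpow_neg hs.le, ← Real.inv_rpow hs.le, div_eq_mul_inv, neg_mul]

lemma P_continuous (m : ℝ) {q : ℝ} (hq : 0 < q) : Continuous (P m q) := by
  rw [continuous_iff_continuousAt]
  intro s
  rcases lt_trichotomy s 0 with hs | rfl | hs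
  · have : P m q =ᶠ[nhds s] fun _ => 0 := by
      filter_upwards [Iio_mem_nhds hs] with x hx
      exact P_of_nonpos m q (le_of_lt hx)
    exact (continuousAt_const).congr this.symm
  · have h0 : P m q 0 = 0 := P_of_nonpos m q le_rfl
    rw [ContinuousAt, h0]
    have hleft : Tendsto (P m q) (nhdsWithin 0 (Set.Iic 0)) (nhds (0:ℝ)) := by
      refine Tendsto.congr' ?_ tendsto_const_nhds
      filter_upwards [self_mem_nhdsWithin] with x hx
      exact (P_of_nonpos m q hx).symm
    have hsup : Tendsto (P m q) (nhdsWithin 0 (Set.Iic 0) ⊔ nhdsWithin 0 (Set.Ioi 0))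
        (nhds (0:ℝ)) := tendsto_sup.2 ⟨hleft, tendsto_P_right m hq⟩
    rwa [nhdsLE_sup_nhdsGT] at hsup
  · have hformula : ContinuousAt (fun x : ℝ => x ^ (-m) * Real.exp (-(q / x))) s := by
      have h1 : ContinuousAt (fun x : ℝ => x ^ (-m)) s :=
        Real.continuousAt_rpow_const s (-m) (Or.inl hs.ne')
      have h2 : ContinuousAt (fun x : ℝ => Real.exp (-(q / x))) s :=
        (Real.continuous_exp.continuousAt).comp
          (((continuousAt_const).div continuousAt_id hs.ne').neg)
      exact h1.mul h2
    refine hformula.congr ?_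
    filter_upwards [Ioi_mem_nhds hs] with x hx
    exact (P_of_pos m q hx).symm

lemma P_hasDerivAt (m : ℝ) {q : ℝ} (hq : 0 < q) (s : ℝ) :
    HasDerivAt (P m q) (-m * P (m + 1) q s + q * P (m + 2) q s) s := by
  rcases lt_trichotomy s 0 with hs | rfl | hs
  · have hval : -m * P (m + 1) q s + q * P (m + 2) q s = 0 := by
      rw [P_of_nonpos _ _ hs.le, P_of_nonpos _ _ hs.le]; ring
    rw [hval]
    refine (hasDerivAt_const s (0:ℝ)).congr_of_eventuallyEq ?_
    filter_upwards [Iio_mem_nhds hs] with x hx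
    exact P_of_nonpos m q hx.le
  · have hval : -m * P (m + 1) q 0 + q * P (m + 2) q 0 = 0 := by
      rw [P_of_nonpos _ _ le_rfl, P_of_nonpos _ _ le_rfl]; ring
    rw [hval, hasDerivAt_iff_tendsto_slope]
    have hcont : Tendsto (P (m + 1) q) (nhdsWithin 0 {(0:ℝ)}ᶜ) (nhds 0) := by
      have := ((P_continuous (m + 1) hq).tendsto 0).mono_left
        (nhdsWithin_le_nhds : nhdsWithin (0:ℝ) {(0:ℝ)}ᶜ ≤ nhds 0)
      rwa [P_of_nonpos _ _ le_rfl] at this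
    refine hcont.congr' ?_
    filter_upwards [self_mem_nhdsWithin] with x hx
    have hx0 : x ≠ 0 := hx
    rcases lt_or_gt_of_ne hx0 with h | h
    · rw [slope_def_field, P_of_nonpos m q h.le, P_of_nonpos (m+1) q h.le,
        P_of_nonpos m q le_rfl]
      simp
    · rw [slope_def_field, P_of_pos m q h, P_of_pos (m+1) q h, P_of_nonpos m q le_rfl]
      rw [neg_add, Real.rpow_add h, Real.rpow_neg_one]
      field_simp
      ring
  · have hd : HasDerivAt (fun x : ℝ => x ^ (-m) * Real.exp (-(q / x)))
        (-m * s ^ (-m - 1) * Real.exp (-(q / s))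
          + s ^ (-m) * (Real.exp (-(q / s)) * (q / s ^ 2))) s := by
      have h1 : HasDerivAt (fun x : ℝ => x ^ (-m)) (-m * s ^ (-m - 1)) s :=
        Real.hasDerivAt_rpow_const (Or.inl hs.ne')
      have h2 : HasDerivAt (fun x : ℝ => -(q / x)) (q / s ^ 2) s := by
        have h3 : HasDerivAt (fun x : ℝ => q / x) (q * -(s ^ 2)⁻¹) s := by
          simpa [div_eq_mul_inv] using (hasDerivAt_inv hs.ne').const_mul q
        have h4 := h3.neg
        refine h4.congr_deriv ?_
        ring
      exact h1.mul (h2.exp)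
    have heq : (fun x : ℝ => x ^ (-m) * Real.exp (-(q / x))) =ᶠ[nhds s] P m q := by
      filter_upwards [Ioi_mem_nhds hs] with x hx
      exact (P_of_pos m q hx).symm
    have hd2 := hd.congr_of_eventuallyEq heq.symm
    refine hd2.congr_deriv (Eq.symm ?_)
    rw [P_of_pos _ _ hs, P_of_pos _ _ hs]
    have e1 : s ^ (-(m+1)) = s ^ (-m - 1) := by ring_nf
    have e2 : s ^ (-(m+2)) = s ^ (-m) * (s ^ 2)⁻¹ := by
      rw [show (-(m+2)) = (-m) + (-2) by ring, Real.rpow_add hs]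
      congr 1
      rw [show ((-2:ℝ)) = ((-2:ℤ) : ℝ) by norm_num, Real.rpow_intCast, zpow_neg]
      norm_num
    rw [e1, e2]
    ring

lemma rpow_mul_exp_le (n : ℕ) {q x : ℝ} (hq : 0 < q) (hx : 0 ≤ x) :
    x ^ n * Real.exp (-(q * x)) ≤ n.factorial / q ^ n := by
  have h1 : (q * x) ^ n / n.factorial ≤ Real.exp (q * x) := by
    calc (q * x) ^ n / n.factorial
        ≤ ∑ i ∈ Finset.range (n + 1), (q * x) ^ i / i.factorial := by
          exact Finset.single_le_sum (f := fun i => (q*x)^i / i.factorial)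
            (fun i _ => by positivity) (Finset.self_mem_range_succ n)
      _ ≤ Real.exp (q * x) := Real.sum_le_exp_of_nonneg (by positivity) _
  have hqn : (0:ℝ) < q ^ n := by positivity
  have hfac : (0:ℝ) < (n.factorial : ℝ) := by positivity
  have h2 : q ^ n * x ^ n ≤ (n.factorial : ℝ) * Real.exp (q * x) := by
    have h3 := (div_le_iff₀ hfac).mp h1
    calc q ^ n * x ^ n = (q * x) ^ n := (mul_pow q x n).symm
      _ ≤ (n.factorial : ℝ) * Real.exp (q * x) := by linarith
  rw [Real.exp_neg]
  have h4 : x ^ n ≤ (n.factorial : ℝ) / q ^ n * Real.exp (q * x) := by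
    rw [div_mul_eq_mul_div, le_div_iff₀ hqn]
    nlinarith
  calc x ^ n * (Real.exp (q * x))⁻¹
      ≤ ((n.factorial : ℝ) / q ^ n * Real.exp (q * x)) * (Real.exp (q * x))⁻¹ :=
        mul_le_mul_of_nonneg_right h4 (by positivity)
    _ = (n.factorial : ℝ) / q ^ n := by
        rw [mul_assoc, mul_inv_cancel₀ (Real.exp_pos _).ne', mul_one]

lemma P_bound (m : ℝ) (hm : 0 ≤ m) {q : ℝ} (hq : 0 < q) :
    ∃ C : ℝ, 0 ≤ C ∧ ∀ s : ℝ, |P m q s| ≤ C := by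
  classical
  set n := ⌈m⌉₊ with hn
  refine ⟨(n.factorial : ℝ) / q ^ n + 1, by positivity, fun s => ?_⟩
  rcases le_or_gt s 0 with hs | hs
  · rw [P_of_nonpos m q hs]; simp; positivity
  · rw [P_of_pos m q hs, abs_of_nonneg (by positivity)]
    set x := s⁻¹ with hx
    have hx0 : 0 < x := inv_pos.2 hs
    have hsx : s ^ (-m) = x ^ m := by
      rw [Real.rpow_neg hs.le, ← Real.inv_rpow hs.le]
    have hqe : -(q / s) = -(q * x) := by rw [div_eq_mul_inv]
    rw [hsx, hqe]
    have hxm : x ^ m ≤ max 1 (x ^ n) := by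
      rcases le_total x 1 with h | h
      · exact le_max_of_le_left (Real.rpow_le_one hx0.le h hm)
      · refine le_max_of_le_right ?_
        rw [← Real.rpow_natCast x n]
        exact Real.rpow_le_rpow_of_exponent_le h (Nat.le_ceil m)
    have hexp : Real.exp (-(q * x)) ≤ 1 :=
      Real.exp_le_one_iff.2 (by nlinarith)
    calc x ^ m * Real.exp (-(q * x))
        ≤ max 1 (x ^ n) * Real.exp (-(q * x)) := by
          exact mul_le_mul_of_nonneg_right hxm (Real.exp_pos _).le
      _ ≤ (n.factorial : ℝ) / q ^ n + 1 := by
          rcases max_cases 1 (x ^ n) with ⟨h1, _⟩ | ⟨h1, _⟩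
          · rw [h1, one_mul]
            have : (0:ℝ) ≤ (n.factorial : ℝ) / q ^ n := by positivity
            linarith [hexp]
          · rw [h1]
            have := rpow_mul_exp_le n hq hx0.le
            linarith

lemma P_le_P (m : ℝ) {q₁ q : ℝ} (hq₁ : 0 < q₁) (hq : q₁ ≤ q) (s : ℝ) :
    |P m q s| ≤ |P m q₁ s| := by
  rcases le_or_gt s 0 with hs | hs
  · rw [P_of_nonpos m q hs, P_of_nonpos m q₁ hs]
  · rw [P_of_pos m q hs, P_of_pos m q₁ hs,
      abs_of_nonneg (by positivity), abs_of_nonneg (by positivity)]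
    refine mul_le_mul_of_nonneg_left ?_ (Real.rpow_nonneg hs.le _)
    exact Real.exp_le_exp.2 (by rw [neg_le_neg_iff]; gcongr)

end BKaux

/-- The boundary heat kernel K_a(γ,s) for the half-line heat equation f_t = f_{γγ}/a. -/
noncomputable def boundaryHeatKernel (a γ s : ℝ) : ℝ :=
  Real.sqrt a * γ / (2 * Real.sqrt Real.pi * s ^ ((3 : ℝ) / 2)) * Real.exp (-(a * γ ^ 2 / (4 * s)))

namespace BKaux

/-- Extension of the kernel by `0` for `s ≤ 0`. -/
noncomputable def Kext (a γ s : ℝ) : ℝ :=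
  Real.sqrt a * γ / (2 * Real.sqrt Real.pi) * P ((3:ℝ)/2) (a * γ^2 / 4) s

/-- s-derivative of `Kext`. -/
noncomputable def Ks (a γ s : ℝ) : ℝ :=
  Real.sqrt a * γ / (2 * Real.sqrt Real.pi) *
    (-((3:ℝ)/2) * P ((5:ℝ)/2) (a * γ^2 / 4) s + a * γ^2 / 4 * P ((7:ℝ)/2) (a * γ^2 / 4) s)

/-- γ-derivative of the kernel (for `s > 0`). -/
noncomputable def Kg (a γ s : ℝ) : ℝ :=
  Real.sqrt a / (2 * Real.sqrt Real.pi) *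
    (P ((3:ℝ)/2) (a * γ^2 / 4) s - a * γ^2 / 2 * P ((5:ℝ)/2) (a * γ^2 / 4) s)

/-- second γ-derivative of the kernel (for `s > 0`). -/
noncomputable def Kgg (a γ s : ℝ) : ℝ :=
  Real.sqrt a / (2 * Real.sqrt Real.pi) *
    (-(3 * a * γ / 2) * P ((5:ℝ)/2) (a * γ^2 / 4) s + a^2 * γ^3 / 4 * P ((7:ℝ)/2) (a * γ^2 / 4) s)

lemma Ks_eq (a γ s : ℝ) (ha : a ≠ 0) : Ks a γ s = 1 / a * Kgg a γ s := by
  unfold Ks Kgg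
  field_simp

lemma Kext_eq_BHK (a γ : ℝ) {s : ℝ} (hs : 0 ≤ s) :
    Kext a γ s = boundaryHeatKernel a γ s := by
  rcases eq_or_lt_of_le hs with rfl | hs
  · rw [Kext, P_of_nonpos _ _ le_rfl, boundaryHeatKernel]
    rw [Real.zero_rpow (by norm_num : ((3:ℝ)/2) ≠ 0)]
    simp
  · rw [Kext, P_of_pos _ _ hs, boundaryHeatKernel, div_div,
      Real.rpow_neg hs.le]
    have hv : (0:ℝ) < s ^ ((3:ℝ)/2) := Real.rpow_pos_of_pos hs _
    have hπ : (0:ℝ) < Real.sqrt Real.pi := Real.sqrt_pos.2 Real.pi_pos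
    field_simp

lemma Kext_hasDerivAt {a γ : ℝ} (hq : 0 < a * γ^2 / 4) (s : ℝ) :
    HasDerivAt (Kext a γ) (Ks a γ s) s := by
  have h := (P_hasDerivAt ((3:ℝ)/2) hq s).const_mul
    (Real.sqrt a * γ / (2 * Real.sqrt Real.pi))
  have e1 : (3:ℝ)/2 + 1 = (5:ℝ)/2 := by norm_num
  have e2 : (3:ℝ)/2 + 2 = (7:ℝ)/2 := by norm_num
  rw [e1, e2] at h
  unfold Kext Ks
  convert h using 1

lemma rpow_52 {u : ℝ} (hu : 0 < u) :
    u ^ (-((5:ℝ)/2)) = (u ^ ((3:ℝ)/2))⁻¹ * u⁻¹ := by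
  rw [show -((5:ℝ)/2) = -((3:ℝ)/2) + (-1) by norm_num, Real.rpow_add hu,
    Real.rpow_neg_one, Real.rpow_neg hu.le]

lemma rpow_72 {u : ℝ} (hu : 0 < u) :
    u ^ (-((7:ℝ)/2)) = (u ^ ((3:ℝ)/2))⁻¹ * (u⁻¹ * u⁻¹) := by
  rw [show -((7:ℝ)/2) = -((3:ℝ)/2) + (-1) + (-1) by norm_num, Real.rpow_add hu,
    Real.rpow_add hu, Real.rpow_neg_one, Real.rpow_neg hu.le, mul_assoc]

lemma rpow_32 {u : ℝ} (hu : 0 < u) :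
    u ^ (-((3:ℝ)/2)) = (u ^ ((3:ℝ)/2))⁻¹ := Real.rpow_neg hu.le _

lemma BHK_hasDerivAt_gamma {a u : ℝ} (hu : 0 < u) (x : ℝ) :
    HasDerivAt (fun y : ℝ => boundaryHeatKernel a y u) (Kg a x u) x := by
  have hv : (0:ℝ) < u ^ ((3:ℝ)/2) := Real.rpow_pos_of_pos hu _
  have hπ : (0:ℝ) < Real.sqrt Real.pi := Real.sqrt_pos.2 Real.pi_pos
  have hinner : HasDerivAt (fun y : ℝ => -(a * y^2 / (4*u))) (-(a * (2*x) / (4*u))) x := by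
    have h0 := (((hasDerivAt_pow 2 x).const_mul a).div_const (4*u)).neg
    simp at h0; exact h0
  have hexp := hinner.exp
  have hlin : HasDerivAt
      (fun y : ℝ => Real.sqrt a * y / (2 * Real.sqrt Real.pi * u ^ ((3:ℝ)/2)))
      (Real.sqrt a / (2 * Real.sqrt Real.pi * u ^ ((3:ℝ)/2))) x := by
    have h0 := ((hasDerivAt_id x).const_mul (Real.sqrt a)).div_const
      (2 * Real.sqrt Real.pi * u ^ ((3:ℝ)/2))
    simpa [mul_comm] using h0
  have hprod := hlin.mul hexp
  unfold boundaryHeatKernel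
  refine hprod.congr_deriv (Eq.symm ?_)
  unfold Kg
  rw [P_of_pos _ _ hu, P_of_pos _ _ hu, div_div, rpow_32 hu, rpow_52 hu]
  field_simp
  ring

lemma Kg_hasDerivAt_gamma {a u : ℝ} (hu : 0 < u) (x : ℝ) :
    HasDerivAt (fun y : ℝ => Kg a y u) (Kgg a x u) x := by
  have hv : (0:ℝ) < u ^ ((3:ℝ)/2) := Real.rpow_pos_of_pos hu _
  have hπ : (0:ℝ) < Real.sqrt Real.pi := Real.sqrt_pos.2 Real.pi_pos
  simp only [Kg, Kgg, P, if_pos hu]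
  have hinner : HasDerivAt (fun y : ℝ => -(a * y^2 / 4 / u)) (-(a * (2*x) / 4 / u)) x := by
    have h0 := ((((hasDerivAt_pow 2 x).const_mul a).div_const 4).div_const u).neg
    simp at h0; exact h0
  have hexp := hinner.exp
  have t1 := hexp.const_mul (u ^ (-((3:ℝ)/2)))
  have ha2 : HasDerivAt (fun y : ℝ => a * y^2 / 2) (a * (2*x) / 2) x := by
    have h0 := ((hasDerivAt_pow 2 x).const_mul a).div_const 2
    simpa using h0
  have t2 := ha2.mul (hexp.const_mul (u ^ (-((5:ℝ)/2))))
  have total := (t1.sub t2).const_mul (Real.sqrt a / (2 * Real.sqrt Real.pi))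
  refine total.congr_deriv (Eq.symm ?_)
  rw [rpow_32 hu, rpow_52 hu, rpow_72 hu]
  field_simp
  ring

lemma Kext_of_nonpos (a γ : ℝ) {s : ℝ} (hs : s ≤ 0) : Kext a γ s = 0 := by
  rw [Kext, P_of_nonpos _ _ hs, mul_zero]

lemma Ks_of_nonpos (a γ : ℝ) {s : ℝ} (hs : s ≤ 0) : Ks a γ s = 0 := by
  rw [Ks, P_of_nonpos _ _ hs, P_of_nonpos _ _ hs]; ring

lemma Kext_continuous {a γ : ℝ} (hq : 0 < a * γ^2 / 4) : Continuous (Kext a γ) := by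
  unfold Kext; exact continuous_const.mul (P_continuous _ hq)

lemma Ks_continuous {a γ : ℝ} (hq : 0 < a * γ^2 / 4) : Continuous (Ks a γ) := by
  unfold Ks
  exact continuous_const.mul ((continuous_const.mul (P_continuous _ hq)).add
    (continuous_const.mul (P_continuous _ hq)))

lemma Kg_continuous {a γ : ℝ} (hq : 0 < a * γ^2 / 4) : Continuous (Kg a γ) := by
  unfold Kg
  exact continuous_const.mul ((P_continuous _ hq).sub
    (continuous_const.mul (P_continuous _ hq)))

lemma Kgg_continuous {a γ : ℝ} (hq : 0 < a * γ^2 / 4) : Continuous (Kgg a γ) := by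
  unfold Kgg
  exact continuous_const.mul ((continuous_const.mul (P_continuous _ hq)).add
    (continuous_const.mul (P_continuous _ hq)))

lemma Ks_bound {a γ : ℝ} (hq : 0 < a * γ^2 / 4) :
    ∃ C : ℝ, 0 ≤ C ∧ ∀ s : ℝ, |Ks a γ s| ≤ C := by
  obtain ⟨C1, hC1n, hC1⟩ := P_bound ((5:ℝ)/2) (by norm_num) hq
  obtain ⟨C2, hC2n, hC2⟩ := P_bound ((7:ℝ)/2) (by norm_num) hq
  refine ⟨|Real.sqrt a * γ / (2 * Real.sqrt Real.pi)| * (((3:ℝ)/2) * C1 + (a * γ^2 / 4) * C2),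
    by positivity, fun s => ?_⟩
  rw [Ks, abs_mul]
  refine mul_le_mul_of_nonneg_left ?_ (abs_nonneg _)
  calc |(-((3:ℝ)/2)) * P ((5:ℝ)/2) (a * γ^2/4) s + a * γ^2/4 * P ((7:ℝ)/2) (a * γ^2/4) s|
      ≤ |(-((3:ℝ)/2)) * P ((5:ℝ)/2) (a * γ^2/4) s| + |a * γ^2/4 * P ((7:ℝ)/2) (a * γ^2/4) s| :=
        abs_add_le _ _
    _ ≤ ((3:ℝ)/2) * C1 + (a * γ^2/4) * C2 := by
        rw [abs_mul, abs_mul, abs_neg, abs_of_nonneg (by norm_num : (0:ℝ) ≤ (3:ℝ)/2),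
          abs_of_nonneg hq.le]
        exact add_le_add (mul_le_mul_of_nonneg_left (hC1 s) (by norm_num))
          (mul_le_mul_of_nonneg_left (hC2 s) hq.le)

lemma Kg_bound {a γ : ℝ} (ha : 0 < a) (hγ : 0 < γ) :
    ∃ C : ℝ, ∀ x ∈ Set.Ioo (γ/2) (2*γ), ∀ u : ℝ, |Kg a x u| ≤ C := by
  have hq₁ : 0 < a * (γ/2)^2 / 4 := by positivity
  obtain ⟨C1, hC1n, hC1⟩ := P_bound ((3:ℝ)/2) (by norm_num) hq₁
  obtain ⟨C2, hC2n, hC2⟩ := P_bound ((5:ℝ)/2) (by norm_num) hq₁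
  refine ⟨|Real.sqrt a / (2 * Real.sqrt Real.pi)| * (C1 + (a * (2*γ)^2 / 2) * C2),
    fun x hx u => ?_⟩
  have hx0 : 0 < x := lt_trans (by positivity) hx.1
  have hqx : a * (γ/2)^2 / 4 ≤ a * x^2 / 4 := by
    have : (γ/2)^2 ≤ x^2 := by nlinarith [hx.1]
    nlinarith
  have hP1 : |P ((3:ℝ)/2) (a*x^2/4) u| ≤ C1 :=
    le_trans (P_le_P _ hq₁ hqx u) (hC1 u)
  have hP2 : |P ((5:ℝ)/2) (a*x^2/4) u| ≤ C2 :=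
    le_trans (P_le_P _ hq₁ hqx u) (hC2 u)
  rw [Kg, abs_mul]
  refine mul_le_mul_of_nonneg_left ?_ (abs_nonneg _)
  calc |P ((3:ℝ)/2) (a*x^2/4) u - a * x^2/2 * P ((5:ℝ)/2) (a*x^2/4) u|
      ≤ |P ((3:ℝ)/2) (a*x^2/4) u| + |a * x^2/2 * P ((5:ℝ)/2) (a*x^2/4) u| := abs_sub _ _
    _ ≤ C1 + (a * (2*γ)^2 / 2) * C2 := by
        rw [abs_mul, abs_of_nonneg (by positivity : (0:ℝ) ≤ a * x^2/2)]
        refine add_le_add hP1 (mul_le_mul ?_ hP2 (abs_nonneg _) (by positivity))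
        have hx2 : x^2 ≤ (2*γ)^2 := pow_le_pow_left₀ hx0.le hx.2.le 2
        linarith [mul_le_mul_of_nonneg_left hx2 ha.le]

lemma Kgg_bound {a γ : ℝ} (ha : 0 < a) (hγ : 0 < γ) :
    ∃ C : ℝ, ∀ x ∈ Set.Ioo (γ/2) (2*γ), ∀ u : ℝ, |Kgg a x u| ≤ C := by
  have hq₁ : 0 < a * (γ/2)^2 / 4 := by positivity
  obtain ⟨C1, hC1n, hC1⟩ := P_bound ((5:ℝ)/2) (by norm_num) hq₁
  obtain ⟨C2, hC2n, hC2⟩ := P_bound ((7:ℝ)/2) (by norm_num) hq₁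
  refine ⟨|Real.sqrt a / (2 * Real.sqrt Real.pi)| *
    ((3*a*(2*γ)/2) * C1 + (a^2 * (2*γ)^3 / 4) * C2), fun x hx u => ?_⟩
  have hx0 : 0 < x := lt_trans (by positivity) hx.1
  have hqx : a * (γ/2)^2 / 4 ≤ a * x^2 / 4 := by
    have : (γ/2)^2 ≤ x^2 := by nlinarith [hx.1]
    nlinarith
  have hP1 : |P ((5:ℝ)/2) (a*x^2/4) u| ≤ C1 :=
    le_trans (P_le_P _ hq₁ hqx u) (hC1 u)
  have hP2 : |P ((7:ℝ)/2) (a*x^2/4) u| ≤ C2 :=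
    le_trans (P_le_P _ hq₁ hqx u) (hC2 u)
  rw [Kgg, abs_mul]
  refine mul_le_mul_of_nonneg_left ?_ (abs_nonneg _)
  calc |(-(3*a*x/2)) * P ((5:ℝ)/2) (a*x^2/4) u + a^2 * x^3/4 * P ((7:ℝ)/2) (a*x^2/4) u|
      ≤ |(-(3*a*x/2)) * P ((5:ℝ)/2) (a*x^2/4) u| + |a^2 * x^3/4 * P ((7:ℝ)/2) (a*x^2/4) u| :=
        abs_add_le _ _
    _ ≤ (3*a*(2*γ)/2) * C1 + (a^2 * (2*γ)^3 / 4) * C2 := by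
        rw [abs_mul, abs_mul, abs_neg, abs_of_nonneg (by positivity : (0:ℝ) ≤ 3*a*x/2),
          abs_of_nonneg (by positivity : (0:ℝ) ≤ a^2*x^3/4)]
        refine add_le_add (mul_le_mul ?_ hP1 (abs_nonneg _) (by positivity))
          (mul_le_mul ?_ hP2 (abs_nonneg _) (by positivity))
        · linarith [mul_le_mul_of_nonneg_left hx.2.le (by linarith : (0:ℝ) ≤ 3*a)]
        · have hx3 : x^3 ≤ (2*γ)^3 := pow_le_pow_left₀ hx0.le hx.2.le 3
          linarith [mul_le_mul_of_nonneg_left hx3 (by positivity : (0:ℝ) ≤ a^2)]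

end BKaux

open BKaux Set

set_option maxHeartbeats 1000000 in
/-- the time-convolution of a bounded continuous boundary forcing g
with the boundary heat kernel solves the heat equation on (0,∞)×(0,∞). -/
theorem boundary_kernel_convolution_heat
    (a : ℝ) (ha : 0 < a)
    (g : ℝ → ℝ)
    (hgcont : ContinuousOn g (Set.Ici 0))
    (hgbdd : ∃ C, ∀ s ≥ (0 : ℝ), |g s| ≤ C)
    (f : ℝ → ℝ → ℝ)
    (hf : ∀ γ t : ℝ, 0 < γ → 0 < t →
      f γ t = ∫ s in (0 : ℝ)..t, g (t - s) * boundaryHeatKernel a γ s) :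
    ∀ γ t : ℝ, 0 < γ → 0 < t →
      deriv (fun t' => f γ t') t
        = 1 / a * deriv (fun γ' => deriv (fun γ'' => f γ'' t) γ') γ := by
  intro γ t hγ ht
  obtain ⟨Cg, hCg⟩ := hgbdd
  have hCg0 : 0 ≤ Cg := (abs_nonneg _).trans (hCg 0 le_rfl)
  have hq : 0 < a * γ ^ 2 / 4 := by positivity
  -- continuity of u ↦ g (t - u) on [0, t]
  have hgu : ContinuousOn (fun u : ℝ => g (t - u)) (Set.uIcc 0 t) := by
    rw [Set.uIcc_of_le ht.le]
    refine hgcont.comp ((continuous_const.sub continuous_id).continuousOn) ?_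
    intro u hu
    exact sub_nonneg.2 hu.2
  -- γ-derivative of the integral, at any positive point
  have claimB : ∀ x : ℝ, 0 < x →
      HasDerivAt (fun y => ∫ u in (0:ℝ)..t, g (t - u) * Kext a y u)
        (∫ u in (0:ℝ)..t, g (t - u) * Kg a x u) x := by
    intro x hx
    obtain ⟨C, hC⟩ := Kg_bound ha hx
    have hball : ∀ y : ℝ, y ∈ Metric.ball x (x/2) → y ∈ Set.Ioo (x/2) (2*x) := by
      intro y hy
      rw [Real.ball_eq_Ioo] at hy
      exact ⟨by linarith [hy.1], by linarith [hy.2]⟩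
    have hε : 0 < x/2 := by positivity
    have hmeas : ∀ᶠ y in nhds x, AEStronglyMeasurable
        (fun u => g (t - u) * Kext a y u) (volume.restrict (Set.uIoc 0 t)) := by
      filter_upwards [Ioi_mem_nhds hx] with y hy
      have hy0 : 0 < y := hy
      have hqy : 0 < a * y ^ 2 / 4 := by positivity
      exact ((hgu.mul (Kext_continuous hqy).continuousOn).mono
        Set.uIoc_subset_uIcc).aestronglyMeasurable measurableSet_uIoc
    have hint : IntervalIntegrable (fun u => g (t - u) * Kext a x u) volume 0 t := by
      have hqx : 0 < a * x ^ 2 / 4 := by positivity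
      exact (hgu.mul (Kext_continuous hqx).continuousOn).intervalIntegrable
    have hmeas' : AEStronglyMeasurable
        (fun u => g (t - u) * Kg a x u) (volume.restrict (Set.uIoc 0 t)) := by
      have hqx : 0 < a * x ^ 2 / 4 := by positivity
      exact ((hgu.mul (Kg_continuous hqx).continuousOn).mono
        Set.uIoc_subset_uIcc).aestronglyMeasurable measurableSet_uIoc
    have hbound : ∀ᵐ u ∂volume, u ∈ Set.uIoc 0 t →
        ∀ y ∈ Metric.ball x (x/2), ‖g (t - u) * Kg a y u‖ ≤ Cg * C := by
      refine MeasureTheory.ae_of_all _ fun u hu y hy => ?_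
      rw [Set.uIoc_of_le ht.le] at hu
      rw [Real.norm_eq_abs, abs_mul]
      have h1 : |g (t - u)| ≤ Cg := hCg _ (by linarith [hu.2])
      have h2 : |Kg a y u| ≤ C := hC y (hball y hy) u
      exact mul_le_mul h1 h2 (abs_nonneg _) hCg0
    have hdiff : ∀ᵐ u ∂volume, u ∈ Set.uIoc 0 t →
        ∀ y ∈ Metric.ball x (x/2),
          HasDerivAt (fun y => g (t - u) * Kext a y u) (g (t - u) * Kg a y u) y := by
      refine MeasureTheory.ae_of_all _ fun u hu y _ => ?_
      rw [Set.uIoc_of_le ht.le] at hu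
      simp only [show ∀ z : ℝ, Kext a z u = boundaryHeatKernel a z u from
        fun z => Kext_eq_BHK a z hu.1.le]
      exact (BHK_hasDerivAt_gamma hu.1 y).const_mul (g (t - u))
    exact (intervalIntegral.hasDerivAt_integral_of_dominated_loc_of_deriv_le
      (𝕜 := ℝ) (μ := volume) (F := fun y u => g (t - u) * Kext a y u)
      (F' := fun y u => g (t - u) * Kg a y u) (bound := fun _ => Cg * C)
      (Metric.ball_mem_nhds _ hε) hmeas hint hmeas' hbound (intervalIntegrable_const) hdiff).2
  -- representation of f(·, t) near positive points
  have hrep : ∀ y : ℝ, 0 < y →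
      f y t = ∫ u in (0:ℝ)..t, g (t - u) * Kext a y u := by
    intro y hy
    rw [hf y t hy ht]
    refine (intervalIntegral.integral_congr fun u hu => ?_).symm
    rw [Set.uIcc_of_le ht.le] at hu
    rw [Kext_eq_BHK a y hu.1]
  have claimB' : ∀ x : ℝ, 0 < x →
      deriv (fun y => f y t) x = ∫ u in (0:ℝ)..t, g (t - u) * Kg a x u := by
    intro x hx
    have hev : (fun y => f y t) =ᶠ[nhds x]
        (fun y => ∫ u in (0:ℝ)..t, g (t - u) * Kext a y u) := by
      filter_upwards [Ioi_mem_nhds hx] with y hy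
      exact hrep y hy
    rw [hev.deriv_eq]
    exact (claimB x hx).deriv
  -- second γ-derivative
  have claimC : HasDerivAt (fun x => ∫ u in (0:ℝ)..t, g (t - u) * Kg a x u)
      (∫ u in (0:ℝ)..t, g (t - u) * Kgg a γ u) γ := by
    obtain ⟨C, hC⟩ := Kgg_bound ha hγ
    have hball : ∀ y : ℝ, y ∈ Metric.ball γ (γ/2) → y ∈ Set.Ioo (γ/2) (2*γ) := by
      intro y hy
      rw [Real.ball_eq_Ioo] at hy
      exact ⟨by linarith [hy.1], by linarith [hy.2]⟩
    have hε : 0 < γ/2 := by positivity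
    have hmeas : ∀ᶠ y in nhds γ, AEStronglyMeasurable
        (fun u => g (t - u) * Kg a y u) (volume.restrict (Set.uIoc 0 t)) := by
      filter_upwards [Ioi_mem_nhds hγ] with y hy
      have hy0 : 0 < y := hy
      have hqy : 0 < a * y ^ 2 / 4 := by positivity
      exact ((hgu.mul (Kg_continuous hqy).continuousOn).mono
        Set.uIoc_subset_uIcc).aestronglyMeasurable measurableSet_uIoc
    have hint : IntervalIntegrable (fun u => g (t - u) * Kg a γ u) volume 0 t :=
      (hgu.mul (Kg_continuous hq).continuousOn).intervalIntegrable
    have hmeas' : AEStronglyMeasurable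
        (fun u => g (t - u) * Kgg a γ u) (volume.restrict (Set.uIoc 0 t)) :=
      ((hgu.mul (Kgg_continuous hq).continuousOn).mono
        Set.uIoc_subset_uIcc).aestronglyMeasurable measurableSet_uIoc
    have hbound : ∀ᵐ u ∂volume, u ∈ Set.uIoc 0 t →
        ∀ y ∈ Metric.ball γ (γ/2), ‖g (t - u) * Kgg a y u‖ ≤ Cg * C := by
      refine MeasureTheory.ae_of_all _ fun u hu y hy => ?_
      rw [Set.uIoc_of_le ht.le] at hu
      rw [Real.norm_eq_abs, abs_mul]
      exact mul_le_mul (hCg _ (by linarith [hu.2])) (hC y (hball y hy) u)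
        (abs_nonneg _) hCg0
    have hdiff : ∀ᵐ u ∂volume, u ∈ Set.uIoc 0 t →
        ∀ y ∈ Metric.ball γ (γ/2),
          HasDerivAt (fun y => g (t - u) * Kg a y u) (g (t - u) * Kgg a y u) y := by
      refine MeasureTheory.ae_of_all _ fun u hu y _ => ?_
      rw [Set.uIoc_of_le ht.le] at hu
      exact (Kg_hasDerivAt_gamma hu.1 y).const_mul (g (t - u))
    exact (intervalIntegral.hasDerivAt_integral_of_dominated_loc_of_deriv_le
      (𝕜 := ℝ) (μ := volume) (F := fun y u => g (t - u) * Kg a y u)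
      (F' := fun y u => g (t - u) * Kgg a y u) (bound := fun _ => Cg * C)
      (Metric.ball_mem_nhds _ hε) hmeas hint hmeas' hbound (intervalIntegrable_const) hdiff).2
  have outer : deriv (fun γ' => deriv (fun γ'' => f γ'' t) γ') γ
      = ∫ u in (0:ℝ)..t, g (t - u) * Kgg a γ u := by
    have hev2 : (fun x => deriv (fun y => f y t) x) =ᶠ[nhds γ]
        (fun x => ∫ u in (0:ℝ)..t, g (t - u) * Kg a x u) := by
      filter_upwards [Ioi_mem_nhds hγ] with x hx
      exact claimB' x hx
    rw [hev2.deriv_eq]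
    exact claimC.deriv
  -- t-derivative
  have hgT : ContinuousOn g (Set.uIcc 0 (t+1)) := by
    rw [Set.uIcc_of_le (by linarith : (0:ℝ) ≤ t + 1)]
    exact hgcont.mono (fun u hu => hu.1)
  have hKτ : ∀ τ : ℝ, Continuous (fun u : ℝ => Kext a γ (τ - u)) := fun τ =>
    (Kext_continuous hq).comp (continuous_const.sub continuous_id)
  have hKsτ : ∀ τ : ℝ, Continuous (fun u : ℝ => Ks a γ (τ - u)) := fun τ =>
    (Ks_continuous hq).comp (continuous_const.sub continuous_id)
  have hgOn : ∀ c d : ℝ, 0 ≤ c → 0 ≤ d → ContinuousOn g (Set.uIcc c d) := by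
    intro c d hc hd
    refine hgcont.mono fun u hu => ?_
    rcases Set.mem_uIcc.1 hu with h | h
    · exact le_trans hc h.1
    · exact le_trans hd h.1
  have hrepT : ∀ τ ∈ Set.Ioo (0:ℝ) (t+1),
      f γ τ = ∫ u in (0:ℝ)..(t+1), g u * Kext a γ (τ - u) := by
    intro τ hτ
    have h1 : f γ τ = ∫ s in (0:ℝ)..τ, g (τ - s) * Kext a γ s := by
      rw [hf γ τ hγ hτ.1]
      refine (intervalIntegral.integral_congr fun u hu => ?_).symm
      rw [Set.uIcc_of_le hτ.1.le] at hu
      rw [Kext_eq_BHK a γ hu.1]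
    have h2 := intervalIntegral.integral_comp_sub_left (a := (0:ℝ)) (b := τ)
      (fun u => g u * Kext a γ (τ - u)) τ
    simp only [sub_sub_cancel, sub_zero, sub_self] at h2
    have hint1 : IntervalIntegrable (fun u => g u * Kext a γ (τ - u)) volume 0 τ :=
      ((hgOn 0 τ le_rfl hτ.1.le).mul (hKτ τ).continuousOn).intervalIntegrable
    have hint2 : IntervalIntegrable (fun u => g u * Kext a γ (τ - u)) volume τ (t+1) :=
      ((hgOn τ (t+1) hτ.1.le (by linarith)).mul (hKτ τ).continuousOn).intervalIntegrable
    have hzero : (∫ u in τ..(t+1), g u * Kext a γ (τ - u)) = 0 := by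
      rw [intervalIntegral.integral_congr (g := fun _ => (0:ℝ)) fun u hu => ?_]
      · simp
      · rw [Set.uIcc_of_le hτ.2.le] at hu
        rw [Kext_of_nonpos a γ (by linarith [hu.1] : τ - u ≤ 0), mul_zero]
    rw [h1, h2, ← intervalIntegral.integral_add_adjacent_intervals hint1 hint2, hzero,
      add_zero]
  have claimT : HasDerivAt (fun τ => ∫ u in (0:ℝ)..(t+1), g u * Kext a γ (τ - u))
      (∫ u in (0:ℝ)..(t+1), g u * Ks a γ (t - u)) t := by
    obtain ⟨CK, hCKn, hCK⟩ := Ks_bound hq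
    have hmeas : ∀ᶠ τ in nhds t, AEStronglyMeasurable
        (fun u => g u * Kext a γ (τ - u)) (volume.restrict (Set.uIoc 0 (t+1))) := by
      refine Filter.Eventually.of_forall fun τ => ?_
      exact ((hgT.mul (hKτ τ).continuousOn).mono
        Set.uIoc_subset_uIcc).aestronglyMeasurable measurableSet_uIoc
    have hint : IntervalIntegrable (fun u => g u * Kext a γ (t - u)) volume 0 (t+1) :=
      (hgT.mul (hKτ t).continuousOn).intervalIntegrable
    have hmeas' : AEStronglyMeasurable
        (fun u => g u * Ks a γ (t - u)) (volume.restrict (Set.uIoc 0 (t+1))) :=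
      ((hgT.mul (hKsτ t).continuousOn).mono
        Set.uIoc_subset_uIcc).aestronglyMeasurable measurableSet_uIoc
    have hbound : ∀ᵐ u ∂volume, u ∈ Set.uIoc 0 (t+1) →
        ∀ τ ∈ Metric.ball t 1, ‖g u * Ks a γ (τ - u)‖ ≤ Cg * CK := by
      refine MeasureTheory.ae_of_all _ fun u hu τ _ => ?_
      rw [Set.uIoc_of_le (by linarith : (0:ℝ) ≤ t+1)] at hu
      rw [Real.norm_eq_abs, abs_mul]
      exact mul_le_mul (hCg _ hu.1.le) (hCK _) (abs_nonneg _) hCg0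
    have hdiff : ∀ᵐ u ∂volume, u ∈ Set.uIoc 0 (t+1) →
        ∀ τ ∈ Metric.ball t 1,
          HasDerivAt (fun τ => g u * Kext a γ (τ - u)) (g u * Ks a γ (τ - u)) τ := by
      refine MeasureTheory.ae_of_all _ fun u _ τ _ => ?_
      have h := (Kext_hasDerivAt hq (τ - u)).comp τ ((hasDerivAt_id τ).sub_const u)
      have h2 := h.const_mul (g u)
      simpa [Function.comp] using h2
    exact (intervalIntegral.hasDerivAt_integral_of_dominated_loc_of_deriv_le
      (𝕜 := ℝ) (μ := volume) (F := fun τ u => g u * Kext a γ (τ - u))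
      (F' := fun τ u => g u * Ks a γ (τ - u)) (bound := fun _ => Cg * CK)
      (Metric.ball_mem_nhds _ one_pos) hmeas hint hmeas' hbound (intervalIntegrable_const) hdiff).2
  have derivT : deriv (fun t' => f γ t') t = ∫ u in (0:ℝ)..(t+1), g u * Ks a γ (t - u) := by
    have hev : (fun t' => f γ t') =ᶠ[nhds t]
        (fun τ => ∫ u in (0:ℝ)..(t+1), g u * Kext a γ (τ - u)) := by
      filter_upwards [Ioo_mem_nhds ht (lt_add_one t)] with τ hτ
      exact hrepT τ hτ
    rw [hev.deriv_eq]
    exact claimT.deriv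
  -- assemble
  have hsplit : (∫ u in (0:ℝ)..(t+1), g u * Ks a γ (t - u))
      = ∫ u in (0:ℝ)..t, g u * Ks a γ (t - u) := by
    have hint1 : IntervalIntegrable (fun u => g u * Ks a γ (t - u)) volume 0 t :=
      ((hgOn 0 t le_rfl ht.le).mul (hKsτ t).continuousOn).intervalIntegrable
    have hint2 : IntervalIntegrable (fun u => g u * Ks a γ (t - u)) volume t (t+1) :=
      ((hgOn t (t+1) ht.le (by linarith)).mul (hKsτ t).continuousOn).intervalIntegrable
    have hzero : (∫ u in t..(t+1), g u * Ks a γ (t - u)) = 0 := by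
      rw [intervalIntegral.integral_congr (g := fun _ => (0:ℝ)) fun u hu => ?_]
      · simp
      · rw [Set.uIcc_of_le (by linarith : t ≤ t+1)] at hu
        rw [Ks_of_nonpos a γ (by linarith [hu.1] : t - u ≤ 0), mul_zero]
    rw [← intervalIntegral.integral_add_adjacent_intervals hint1 hint2, hzero, add_zero]
  have hswap : (∫ u in (0:ℝ)..t, g u * Ks a γ (t - u))
      = ∫ u in (0:ℝ)..t, g (t - u) * Ks a γ u := by
    have h2 := intervalIntegral.integral_comp_sub_left (a := (0:ℝ)) (b := t)
      (fun u => g u * Ks a γ (t - u)) t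
    simp only [sub_sub_cancel, sub_zero, sub_self] at h2
    exact h2.symm
  have hfinal : (∫ u in (0:ℝ)..t, g (t - u) * Ks a γ u)
      = 1 / a * ∫ u in (0:ℝ)..t, g (t - u) * Kgg a γ u := by
    rw [← intervalIntegral.integral_const_mul]
    refine intervalIntegral.integral_congr fun u _ => ?_
    rw [Ks_eq a γ u ha.ne']
    ring
  rw [derivT, outer, hsplit, hswap, hfinal]
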